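/- (Theorem 2: uniform upper and lower bounds on Jacobian products.) Let (z_t)_{t\ge 1} be an orbit of the regularized PLRNN, i.e. z_{t+1} = F(z_t), fix t \ge 1, and suppose there is a constant c < 1 such that \|R(z_k)\|_2 \le c for all k > t. Then for every T > t the ordered product of Jacobians satisfies 1 \le \|W_\Omega(z_T)\, W_\Omega(z_{T-1}) \cdots W_\Omega(z_{t+1})\|_2 \le 1 + c + \|S\|_2/(1-c); in particular these norms are bounded above and below, uniformly in T, by finite positive constants. -/

import Mathlib

set_option linter.unusedSectionVars false


open Matrix Filter Topology

/-- The operator 2-norm (largest singular value) of a real matrix. -/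
noncomputable def opNorm2 {m n : Type*} [Fintype m] [Fintype n] [DecidableEq n]
    (A : Matrix m n ℝ) : ℝ :=
  ‖LinearMap.toContinuousLinearMap (Matrix.toEuclideanLin (𝕜 := ℝ) A)‖

/-- Euclidean norm of a real vector. -/
noncomputable def vnorm {n : Type*} [Fintype n] (v : n → ℝ) : ℝ :=
  Real.sqrt (∑ i, v i ^ 2)

/-- Componentwise ReLU. -/
noncomputable def relu {n : Type*} (z : n → ℝ) : n → ℝ := fun i => max 0 (z i)

/-- `Dmat z` is the diagonal 0–1 matrix with `(Dmat z) i i = 1` iff `z i > 0`. -/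
noncomputable def Dmat {n : Type*} [Fintype n] [DecidableEq n] (z : n → ℝ) :
    Matrix n n ℝ :=
  Matrix.diagonal (fun i => if 0 < z i then (1 : ℝ) else 0)

/-- `W_Ω(z) = A + W D(z)`. -/
noncomputable def Wom {n : Type*} [Fintype n] [DecidableEq n]
    (A W : Matrix n n ℝ) (z : n → ℝ) : Matrix n n ℝ :=
  A + W * Dmat z

/-- The deterministic, input-free PLRNN map `F(z) = A z + W φ(z) + h`. -/
noncomputable def plrnn {n : Type*} [Fintype n] [DecidableEq n]
    (A W : Matrix n n ℝ) (h : n → ℝ) (z : n → ℝ) : n → ℝ :=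
  A.mulVec z + W.mulVec (relu z) + h


open scoped Matrix.Norms.L2Operator

section basic
variable {m n l : Type*} [Fintype m] [Fintype n] [Fintype l] [DecidableEq m] [DecidableEq n] [DecidableEq l]

lemma opNorm2_eq_norm (A : Matrix m n ℝ) : opNorm2 A = ‖A‖ := rfl

lemma vnorm_eq (v : n → ℝ) : vnorm v = ‖(WithLp.equiv 2 (n → ℝ)).symm v‖ := by
  rw [EuclideanSpace.norm_eq, vnorm]
  congr 1
  apply Finset.sum_congr rfl
  intro i _
  rw [Real.norm_eq_abs, sq_abs]; rfl

lemma vnorm_nonneg (v : n → ℝ) : 0 ≤ vnorm v := Real.sqrt_nonneg _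

lemma vnorm_mulVec_le (A : Matrix m n ℝ) (v : n → ℝ) :
    vnorm (A *ᵥ v) ≤ opNorm2 A * vnorm v := by
  rw [vnorm_eq, vnorm_eq]
  exact A.l2_opNorm_mulVec ((WithLp.equiv 2 (n → ℝ)).symm v)

lemma opNorm2_le_of (A : Matrix m n ℝ) {C : ℝ} (hC : 0 ≤ C)
    (h : ∀ v : n → ℝ, vnorm (A *ᵥ v) ≤ C * vnorm v) : opNorm2 A ≤ C := by
  apply ContinuousLinearMap.opNorm_le_bound _ hC
  intro x
  have := h (WithLp.equiv 2 (n → ℝ) x)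
  rw [vnorm_eq, vnorm_eq] at this
  simp at this; exact this

lemma opNorm2_nonneg (A : Matrix m n ℝ) : 0 ≤ opNorm2 A := norm_nonneg _

lemma opNorm2_zero : opNorm2 (0 : Matrix m n ℝ) = 0 := by
  rw [opNorm2_eq_norm]; exact norm_zero

lemma opNorm2_add_le (A B : Matrix m n ℝ) : opNorm2 (A + B) ≤ opNorm2 A + opNorm2 B := by
  simp only [opNorm2_eq_norm]; exact norm_add_le A B

lemma opNorm2_mul_le (A : Matrix m n ℝ) (B : Matrix n l ℝ) :
    opNorm2 (A * B) ≤ opNorm2 A * opNorm2 B := by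
  simp only [opNorm2_eq_norm]; exact A.l2_opNorm_mul B

lemma opNorm2_one_le : opNorm2 (1 : Matrix n n ℝ) ≤ 1 := by
  apply opNorm2_le_of _ zero_le_one
  intro v
  rw [Matrix.one_mulVec, one_mul]

lemma opNorm2_diagonal_le (d : n → ℝ) (hd : ∀ i, |d i| ≤ 1) :
    opNorm2 (Matrix.diagonal d) ≤ 1 := by
  apply opNorm2_le_of _ zero_le_one
  intro v
  rw [one_mul, vnorm, vnorm]
  apply Real.sqrt_le_sqrt
  apply Finset.sum_le_sum
  intro i _
  rw [Matrix.mulVec_diagonal, mul_pow]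
  have h1 : d i ^ 2 ≤ 1 := by
    rw [← sq_abs]; exact pow_le_one₀ (abs_nonneg _) (hd i)
  nlinarith [sq_nonneg (v i)]

end basic

section blocks
variable {m₁ m₂ n₁ n₂ : Type*} [Fintype m₁] [Fintype m₂] [Fintype n₁] [Fintype n₂]
  [DecidableEq m₁] [DecidableEq m₂] [DecidableEq n₁] [DecidableEq n₂]

lemma sq_sum_sum (v : m₁ ⊕ m₂ → ℝ) :
    ∑ i, v i ^ 2 = (∑ i, v (Sum.inl i) ^ 2) + ∑ i, v (Sum.inr i) ^ 2 :=
  Fintype.sum_sum_type _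

lemma vnorm_comp_inl_le (v : m₁ ⊕ m₂ → ℝ) : vnorm (v ∘ Sum.inl) ≤ vnorm v := by
  apply Real.sqrt_le_sqrt
  rw [sq_sum_sum v]
  have : 0 ≤ ∑ i, v (Sum.inr i) ^ 2 := Finset.sum_nonneg fun i _ => sq_nonneg _
  simp only [Function.comp]
  linarith

lemma vnorm_comp_inr_le (v : m₁ ⊕ m₂ → ℝ) : vnorm (v ∘ Sum.inr) ≤ vnorm v := by
  apply Real.sqrt_le_sqrt
  rw [sq_sum_sum v]
  have : 0 ≤ ∑ i, v (Sum.inl i) ^ 2 := Finset.sum_nonneg fun i _ => sq_nonneg _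
  simp only [Function.comp]
  linarith

lemma vnorm_elim_left (u : m₁ → ℝ) : vnorm (Sum.elim u (0 : m₂ → ℝ)) = vnorm u := by
  unfold vnorm
  rw [sq_sum_sum]
  simp

lemma vnorm_elim_right (w : m₂ → ℝ) : vnorm (Sum.elim (0 : m₁ → ℝ) w) = vnorm w := by
  unfold vnorm
  rw [sq_sum_sum]
  simp

lemma opNorm2_fromBlocks₁₁_le (X : Matrix m₁ n₁ ℝ) :
    opNorm2 (Matrix.fromBlocks X 0 0 (0 : Matrix m₂ n₂ ℝ)) ≤ opNorm2 X := by
  apply opNorm2_le_of _ (opNorm2_nonneg X)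
  intro v
  rw [Matrix.fromBlocks_mulVec]
  simp only [Matrix.zero_mulVec, add_zero, zero_add]
  rw [show Sum.elim (X *ᵥ v ∘ Sum.inl) (0 : m₂ → ℝ) = Sum.elim (X *ᵥ (v ∘ Sum.inl)) 0 by simp]
  rw [vnorm_elim_left]
  calc vnorm (X *ᵥ (v ∘ Sum.inl)) ≤ opNorm2 X * vnorm (v ∘ Sum.inl) := vnorm_mulVec_le _ _
    _ ≤ opNorm2 X * vnorm v := by
        exact mul_le_mul_of_nonneg_left (vnorm_comp_inl_le v) (opNorm2_nonneg X)

lemma opNorm2_fromBlocks₂₁_le (X : Matrix m₂ n₁ ℝ) :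
    opNorm2 (Matrix.fromBlocks (0 : Matrix m₁ n₁ ℝ) (0 : Matrix m₁ n₂ ℝ) X 0) ≤ opNorm2 X := by
  apply opNorm2_le_of _ (opNorm2_nonneg X)
  intro v
  rw [Matrix.fromBlocks_mulVec]
  simp only [Matrix.zero_mulVec, add_zero, zero_add]
  rw [vnorm_elim_right]
  calc vnorm (X *ᵥ (v ∘ Sum.inl)) ≤ opNorm2 X * vnorm (v ∘ Sum.inl) := vnorm_mulVec_le _ _
    _ ≤ opNorm2 X * vnorm v := by
        exact mul_le_mul_of_nonneg_left (vnorm_comp_inl_le v) (opNorm2_nonneg X)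

lemma opNorm2_fromBlocks₂₂_le (X : Matrix m₂ n₂ ℝ) :
    opNorm2 (Matrix.fromBlocks (0 : Matrix m₁ n₁ ℝ) 0 0 X) ≤ opNorm2 X := by
  apply opNorm2_le_of _ (opNorm2_nonneg X)
  intro v
  rw [Matrix.fromBlocks_mulVec]
  simp only [Matrix.zero_mulVec, add_zero, zero_add]
  rw [vnorm_elim_right]
  calc vnorm (X *ᵥ (v ∘ Sum.inr)) ≤ opNorm2 X * vnorm (v ∘ Sum.inr) := vnorm_mulVec_le _ _
    _ ≤ opNorm2 X * vnorm v := by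
        exact mul_le_mul_of_nonneg_left (vnorm_comp_inr_le v) (opNorm2_nonneg X)

lemma one_le_opNorm2_of_blocks [Nonempty m₁] (M : Matrix (m₁ ⊕ m₂) (m₁ ⊕ m₂) ℝ)
    (h11 : M.toBlocks₁₁ = 1) (h12 : M.toBlocks₁₂ = 0) : 1 ≤ opNorm2 M := by
  obtain ⟨i₀⟩ := ‹Nonempty m₁›
  set v : m₁ ⊕ m₂ → ℝ := Sum.elim (Pi.single i₀ 1) 0 with hv
  have hM : M = Matrix.fromBlocks 1 0 M.toBlocks₂₁ M.toBlocks₂₂ := by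
    rw [← h11, ← h12]; exact (Matrix.fromBlocks_toBlocks M).symm
  have hvnorm : vnorm v = 1 := by
    rw [hv, vnorm_elim_left]
    simp [vnorm, Pi.single_apply]
  have hMv : M *ᵥ v = Sum.elim (Pi.single i₀ 1) (M.toBlocks₂₁ *ᵥ Pi.single i₀ 1) := by
    rw [hv, hM, Matrix.fromBlocks_mulVec, Sum.elim_comp_inl, Sum.elim_comp_inr]
    simp only [Matrix.zero_mulVec, add_zero, Matrix.mulVec_single, mul_one]
    congr 1
    ext i
    simp [Matrix.one_apply, Pi.single_apply]
    simp
  have h1 : (1 : ℝ) ≤ vnorm (M *ᵥ v) := by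
    rw [hMv]
    have : (1 : ℝ) ≤ ∑ i, Sum.elim (Pi.single i₀ (1:ℝ)) (M.toBlocks₂₁ *ᵥ Pi.single i₀ 1) i ^ 2 := by
      rw [sq_sum_sum]
      have h2 : ∑ i, Sum.elim (Pi.single i₀ (1:ℝ)) (M.toBlocks₂₁ *ᵥ Pi.single i₀ 1) (Sum.inl i) ^ 2 = 1 := by
        simp [Pi.single_apply]
      have h3 : 0 ≤ ∑ i, Sum.elim (Pi.single i₀ (1:ℝ)) (M.toBlocks₂₁ *ᵥ Pi.single i₀ 1) (Sum.inr i) ^ 2 :=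
        Finset.sum_nonneg fun i _ => sq_nonneg _
      linarith
    calc (1:ℝ) = Real.sqrt 1 := by simp
      _ ≤ _ := Real.sqrt_le_sqrt this
  calc (1:ℝ) ≤ vnorm (M *ᵥ v) := h1
    _ ≤ opNorm2 M * vnorm v := vnorm_mulVec_le _ _
    _ = opNorm2 M := by rw [hvnorm, mul_one]

end blocks


section wom
variable {p q : ℕ} (A W : Matrix (Fin p ⊕ Fin q) (Fin p ⊕ Fin q) ℝ)
    (hA : A.IsDiag) (hAreg : ∀ i : Fin p, A (Sum.inl i) (Sum.inl i) = 1)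
    (hWreg : ∀ (i : Fin p) (j : Fin p ⊕ Fin q), W (Sum.inl i) j = 0)
    (zv : Fin p ⊕ Fin q → ℝ)

include hA hAreg hWreg in
lemma wom_blocks11 : (Wom A W zv).toBlocks₁₁ = 1 := by
  ext i j
  simp only [Matrix.toBlocks₁₁, Wom, Matrix.add_apply, Matrix.mul_apply, Matrix.of_apply]
  rw [Finset.sum_eq_zero (fun k _ => by rw [hWreg i k, zero_mul])]
  by_cases h : i = j
  · subst h; simp [hAreg i, Matrix.one_apply]
  · rw [Matrix.one_apply_ne h, hA (by simpa using h), add_zero]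

include hA hWreg in
lemma wom_blocks12 : (Wom A W zv).toBlocks₁₂ = 0 := by
  ext i j
  simp only [Matrix.toBlocks₁₂, Wom, Matrix.add_apply, Matrix.mul_apply, Matrix.of_apply]
  rw [Finset.sum_eq_zero (fun k _ => by rw [hWreg i k, zero_mul])]
  simp [hA (show (Sum.inl i : Fin p ⊕ Fin q) ≠ Sum.inr j by simp)]

include hA in
lemma wom_blocks21 : (Wom A W zv).toBlocks₂₁ =
    W.toBlocks₂₁ * Matrix.diagonal (fun j => if 0 < zv (Sum.inl j) then (1:ℝ) else 0) := by
  ext i j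
  show (Wom A W zv) (Sum.inr i) (Sum.inl j) = _
  rw [Matrix.mul_diagonal]
  show _ = W (Sum.inr i) (Sum.inl j) * _
  simp only [Wom, Matrix.add_apply, Matrix.mul_apply]
  rw [hA (show (Sum.inr i : Fin p ⊕ Fin q) ≠ Sum.inl j by simp), zero_add]
  rw [Finset.sum_eq_single (Sum.inl j)]
  · simp [Dmat, Matrix.diagonal_apply_eq]
  · intro b _ hb
    rw [show Dmat zv b (Sum.inl j) = 0 from Matrix.diagonal_apply_ne _ hb, mul_zero]
  · intro h; exact absurd (Finset.mem_univ _) h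

include hA in
lemma wom_blocks21_norm_le : opNorm2 (Wom A W zv).toBlocks₂₁ ≤ opNorm2 W.toBlocks₂₁ := by
  rw [wom_blocks21 A W hA zv]
  calc opNorm2 (W.toBlocks₂₁ * _) ≤ opNorm2 W.toBlocks₂₁ * opNorm2 (Matrix.diagonal _) :=
        opNorm2_mul_le _ _
    _ ≤ opNorm2 W.toBlocks₂₁ * 1 := by
        apply mul_le_mul_of_nonneg_left _ (opNorm2_nonneg _)
        apply opNorm2_diagonal_le
        intro i
        split <;> simp
    _ = opNorm2 W.toBlocks₂₁ := mul_one _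

end wom

lemma prod_blocks {p q : ℕ} (s c : ℝ) (hs : 0 ≤ s) (hc : 0 ≤ c)
    (l : List (Matrix (Fin p ⊕ Fin q) (Fin p ⊕ Fin q) ℝ))
    (hl : ∀ M ∈ l, M.toBlocks₁₁ = 1 ∧ M.toBlocks₁₂ = 0 ∧
        opNorm2 M.toBlocks₂₁ ≤ s ∧ opNorm2 M.toBlocks₂₂ ≤ c) :
    l.prod.toBlocks₁₁ = 1 ∧ l.prod.toBlocks₁₂ = 0 ∧
    opNorm2 l.prod.toBlocks₂₁ ≤ s * ∑ j ∈ Finset.range l.length, c ^ j ∧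
    opNorm2 l.prod.toBlocks₂₂ ≤ c ^ l.length := by
  induction l with
  | nil =>
    simp only [List.prod_nil, List.length_nil]
    have h1 : (1 : Matrix (Fin p ⊕ Fin q) (Fin p ⊕ Fin q) ℝ) = Matrix.fromBlocks 1 0 0 1 :=
      Matrix.fromBlocks_one.symm
    rw [h1, Matrix.toBlocks_fromBlocks₁₁, Matrix.toBlocks_fromBlocks₁₂,
      Matrix.toBlocks_fromBlocks₂₁, Matrix.toBlocks_fromBlocks₂₂]
    refine ⟨rfl, rfl, ?_, ?_⟩
    · simp [opNorm2_zero]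
    · simpa using opNorm2_one_le
  | cons M l ih =>
    obtain ⟨h11, h12, h21, h22⟩ := hl M List.mem_cons_self
    obtain ⟨p11, p12, p21, p22⟩ := ih (fun N hN => hl N (List.mem_cons_of_mem _ hN))
    have hMeq : M = Matrix.fromBlocks 1 0 M.toBlocks₂₁ M.toBlocks₂₂ := by
      rw [← h11, ← h12]; exact (Matrix.fromBlocks_toBlocks M).symm
    have hPeq : l.prod = Matrix.fromBlocks 1 0 l.prod.toBlocks₂₁ l.prod.toBlocks₂₂ := by
      rw [← p11, ← p12]; exact (Matrix.fromBlocks_toBlocks _).symm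
    have key : (M :: l).prod = Matrix.fromBlocks 1 0
        (M.toBlocks₂₁ + M.toBlocks₂₂ * l.prod.toBlocks₂₁)
        (M.toBlocks₂₂ * l.prod.toBlocks₂₂) := by
      rw [List.prod_cons]
      conv_lhs => rw [hMeq, hPeq]
      rw [Matrix.fromBlocks_multiply]
      congr 1 <;> simp
    rw [key, Matrix.toBlocks_fromBlocks₁₁, Matrix.toBlocks_fromBlocks₁₂,
      Matrix.toBlocks_fromBlocks₂₁, Matrix.toBlocks_fromBlocks₂₂, List.length_cons]
    refine ⟨rfl, rfl, ?_, ?_⟩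
    · calc opNorm2 (M.toBlocks₂₁ + M.toBlocks₂₂ * l.prod.toBlocks₂₁)
          ≤ opNorm2 M.toBlocks₂₁ + opNorm2 (M.toBlocks₂₂ * l.prod.toBlocks₂₁) :=
            opNorm2_add_le _ _
        _ ≤ s + opNorm2 M.toBlocks₂₂ * opNorm2 l.prod.toBlocks₂₁ :=
            add_le_add h21 (opNorm2_mul_le _ _)
        _ ≤ s + c * (s * ∑ j ∈ Finset.range l.length, c ^ j) :=
            add_le_add_right (mul_le_mul h22 p21 (opNorm2_nonneg _) hc) s
        _ = s * ∑ j ∈ Finset.range (l.length + 1), c ^ j := by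
            rw [geom_sum_succ]; ring
    · calc opNorm2 (M.toBlocks₂₂ * l.prod.toBlocks₂₂)
          ≤ opNorm2 M.toBlocks₂₂ * opNorm2 l.prod.toBlocks₂₂ := opNorm2_mul_le _ _
        _ ≤ c * c ^ l.length := mul_le_mul h22 p22 (opNorm2_nonneg _) hc
        _ = c ^ (l.length + 1) := (pow_succ' c l.length).symm



/-- Theorem 2: uniform bounds on Jacobian products. States are indexed by
`Fin p ⊕ Fin q` with the regularized ('memory') subsystem `Fin p` (so `M_reg = p`,
`M - M_reg = q`): `A` is diagonal with `A i i = 1` on the regularized block, and the first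
`p` rows of `W` vanish.  If along the orbit `‖R(z k)‖₂ ≤ c < 1` for all `k > t`, where
`R(z) = (W_Ω(z))₂₂` is the non-regularized block of the Jacobian, then for all `T > t`,
`1 ≤ ‖W_Ω(z T) ⋯ W_Ω(z (t+1))‖₂ ≤ 1 + c + ‖S‖₂ / (1 - c)` where `S = W₂₁`. -/
theorem regularized_jacobian_products_bounded {p q : ℕ} (hp : 1 ≤ p) (hq : 1 ≤ q)
    (A W : Matrix (Fin p ⊕ Fin q) (Fin p ⊕ Fin q) ℝ)
    (hA : A.IsDiag) (hAreg : ∀ i : Fin p, A (Sum.inl i) (Sum.inl i) = 1)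
    (hWd : ∀ i, W i i = 0) (hWreg : ∀ (i : Fin p) (j : Fin p ⊕ Fin q), W (Sum.inl i) j = 0)
    (h : Fin p ⊕ Fin q → ℝ)
    (z : ℕ → Fin p ⊕ Fin q → ℝ) (horb : ∀ t', 1 ≤ t' → z (t' + 1) = plrnn A W h (z t'))
    (t : ℕ) (ht : 1 ≤ t) (c : ℝ) (hc : c < 1)
    (hR : ∀ k, t < k → opNorm2 ((Wom A W (z k)).toBlocks₂₂) ≤ c) :
    ∀ T, t < T →
      1 ≤ opNorm2 (((List.range (T - t)).map (fun i => Wom A W (z (T - i)))).prod)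
      ∧ opNorm2 (((List.range (T - t)).map (fun i => Wom A W (z (T - i)))).prod)
          ≤ 1 + c + opNorm2 W.toBlocks₂₁ / (1 - c) := by
  intro T hT
  haveI : Nonempty (Fin p) := ⟨⟨0, hp⟩⟩
  set n := T - t with hn
  have hn1 : 1 ≤ n := by omega
  have hc0 : 0 ≤ c := le_trans (opNorm2_nonneg _) (hR (t + 1) (by omega))
  set s := opNorm2 W.toBlocks₂₁ with hs
  have hs0 : 0 ≤ s := opNorm2_nonneg _
  set L := (List.range n).map (fun i => Wom A W (z (T - i))) with hL
  have hl : ∀ M ∈ L, M.toBlocks₁₁ = 1 ∧ M.toBlocks₁₂ = 0 ∧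
      opNorm2 M.toBlocks₂₁ ≤ s ∧ opNorm2 M.toBlocks₂₂ ≤ c := by
    intro M hM
    rw [hL, List.mem_map] at hM
    obtain ⟨i, hi, rfl⟩ := hM
    rw [List.mem_range] at hi
    refine ⟨wom_blocks11 A W hA hAreg hWreg _, wom_blocks12 A W hA hWreg _,
      wom_blocks21_norm_le A W hA _, hR (T - i) (by omega)⟩
  obtain ⟨P11, P12, P21, P22⟩ := prod_blocks s c hs0 hc0 L hl
  have hlen : L.length = n := by rw [hL]; simp
  rw [hlen] at P21 P22
  constructor
  · exact one_le_opNorm2_of_blocks L.prod P11 P12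
  · have hgeom : ∑ j ∈ Finset.range n, c ^ j ≤ 1 / (1 - c) := by
      rw [le_div_iff₀ (by linarith)]
      have hg := geom_sum_mul c n
      nlinarith [pow_nonneg hc0 n]
    have hX : opNorm2 L.prod.toBlocks₂₁ ≤ s / (1 - c) := by
      calc opNorm2 L.prod.toBlocks₂₁ ≤ s * ∑ j ∈ Finset.range n, c ^ j := P21
        _ ≤ s * (1 / (1 - c)) := mul_le_mul_of_nonneg_left hgeom hs0
        _ = s / (1 - c) := by ring
    have hP : opNorm2 L.prod.toBlocks₂₂ ≤ c :=
      le_trans P22 (pow_le_of_le_one hc0 hc.le (by omega))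
    have hdecomp : L.prod = Matrix.fromBlocks 1 0 0 0 +
        (Matrix.fromBlocks 0 0 L.prod.toBlocks₂₁ 0 +
         Matrix.fromBlocks 0 0 0 L.prod.toBlocks₂₂) := by
      conv_lhs => rw [← Matrix.fromBlocks_toBlocks L.prod, P11, P12]
      rw [Matrix.fromBlocks_add, Matrix.fromBlocks_add]
      simp
    calc opNorm2 L.prod ≤ opNorm2 (Matrix.fromBlocks 1 0 0 0) +
          (opNorm2 (Matrix.fromBlocks 0 0 L.prod.toBlocks₂₁ 0) +
           opNorm2 (Matrix.fromBlocks 0 0 0 L.prod.toBlocks₂₂)) := by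
          conv_lhs => rw [hdecomp]
          exact le_trans (opNorm2_add_le _ _) (add_le_add_right (opNorm2_add_le _ _) _)
      _ ≤ 1 + (s / (1 - c) + c) := by
          refine add_le_add (le_trans (opNorm2_fromBlocks₁₁_le _) opNorm2_one_le)
            (add_le_add (le_trans (opNorm2_fromBlocks₂₁_le _) hX)
              (le_trans (opNorm2_fromBlocks₂₂_le _) hP))
      _ = 1 + c + s / (1 - c) := by ring
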